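/- There is no informationally complete position observable: for any Borel probability measure ρ on ℝ there exist distinct states T ≠ T′ on L²(ℝ) with p_T^{E_ρ} = p_{T′}^{E_ρ}. Concretely, for any unit vector ψ ∈ L²(ℝ) and any p ≠ 0, setting ψ′ = V(p)ψ where (V(p)f)(x) = e^{ipx}f(x), the rank-one states associated to ψ and ψ′ are distinct but give the same outcome distributions for every position observable E_ρ. -/

import Mathlib

open MeasureTheory Complex

noncomputable section

/-- `L²(ℝ)` with Lebesgue measure. -/
abbrev L2 : Type := Lp ℂ 2 (volume : Measure ℝ)

/-- `T` is the operator of multiplication by the bounded function `x ↦ ρ(X − x)`. -/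
def IsMulByMeas (ρ : Measure ℝ) (X : Set ℝ) (T : L2 →L[ℂ] L2) : Prop :=
  ∀ f : L2, (T f : ℝ → ℂ) =ᵐ[volume]
    fun x => ((ρ ((· + x) ⁻¹' X)).toReal : ℂ) * (f : ℝ → ℂ) x

lemma countable_exp_level (p : ℝ) (hp : p ≠ 0) (c : ℂ) :
    Set.Countable {x : ℝ | Complex.exp (Complex.I * p * x) = c} := by
  set S := {x : ℝ | Complex.exp (Complex.I * p * x) = c} with hS
  rcases Set.eq_empty_or_nonempty S with h | ⟨x₀, hx₀⟩
  · simp [h]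
  · apply Set.Countable.mono _ (Set.countable_range (fun n : ℤ => x₀ + n * (2 * Real.pi / p)))
    intro x hx
    have hxx : Complex.exp (Complex.I * p * x) = Complex.exp (Complex.I * p * x₀) := by
      rw [hx, hx₀]
    rw [Complex.exp_eq_exp_iff_exists_int] at hxx
    obtain ⟨n, hn⟩ := hxx
    refine ⟨n, ?_⟩
    have hpI : (p : ℂ) ≠ 0 := by exact_mod_cast hp
    have hx2 : (x : ℂ) = x₀ + n * (2 * Real.pi / p) := by
      field_simp
      apply mul_left_cancel₀ Complex.I_ne_zero
      ring_nf
      ring_nf at hn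
      linear_combination hn
    have : ((x₀ + n * (2 * Real.pi / p) : ℝ) : ℂ) = (x : ℂ) := by push_cast; rw [hx2]
    exact (Complex.ofReal_inj.mp this)

theorem stmt10 (ρ : Measure ℝ) [IsProbabilityMeasure ρ]
    (E : Set ℝ → (L2 →L[ℂ] L2))
    (hE : ∀ X : Set ℝ, MeasurableSet X → IsMulByMeas ρ X (E X))
    (ψ ψ' : L2) (hψ : ‖ψ‖ = 1) (p : ℝ) (hp : p ≠ 0)
    (hψ' : (ψ' : ℝ → ℂ) =ᵐ[volume] fun x => Complex.exp (Complex.I * p * x) * (ψ : ℝ → ℂ) x) :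
    (¬ ∃ c : ℂ, ψ' = c • ψ) ∧
    ∀ X : Set ℝ, MeasurableSet X → (inner ℂ ψ (E X ψ) : ℂ) = inner ℂ ψ' (E X ψ') := by
  constructor
  · rintro ⟨c, hc⟩
    have hsm : ((c • ψ : L2) : ℝ → ℂ) =ᵐ[volume] fun x => c * (ψ : ℝ → ℂ) x := by
      filter_upwards [Lp.coeFn_smul c ψ] with x hx
      simpa using hx
    have hS : (volume : Measure ℝ) {x : ℝ | Complex.exp (Complex.I * p * x) = c} = 0 :=
      (countable_exp_level p hp c).measure_zero _
    have hnm : ∀ᵐ x ∂(volume : Measure ℝ), x ∉ {x : ℝ | Complex.exp (Complex.I * p * x) = c} :=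
      measure_eq_zero_iff_ae_notMem.mp hS
    have hzero : (ψ : ℝ → ℂ) =ᵐ[volume] 0 := by
      rw [hc] at hψ'
      filter_upwards [hψ', hsm, hnm] with x h1 h2 h3
      have : Complex.exp (Complex.I * p * x) * (ψ : ℝ → ℂ) x = c * (ψ : ℝ → ℂ) x :=
        h1.symm.trans h2
      by_contra hne
      exact h3 (mul_right_cancel₀ hne this)
    have : ψ = 0 := Lp.ext (hzero.trans (Lp.coeFn_zero ℂ 2 volume).symm)
    rw [this] at hψ
    simp at hψ
  · intro X hX
    have h1 := hE X hX ψ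
    have h2 := hE X hX ψ'
    rw [MeasureTheory.L2.inner_def, MeasureTheory.L2.inner_def]
    apply integral_congr_ae
    filter_upwards [h1, h2, hψ'] with x e1 e2 e3
    rw [e1, e2, e3]
    simp only [RCLike.inner_apply, map_mul]
    have he : (starRingEnd ℂ) (Complex.exp (Complex.I * p * x)) *
        Complex.exp (Complex.I * p * x) = 1 := by
      rw [← Complex.exp_conj, ← Complex.exp_add]
      simp only [map_mul, Complex.conj_I, Complex.conj_ofReal]
      ring_nf
      exact Complex.exp_zero
    set m : ℂ := ((ρ ((· + x) ⁻¹' X)).toReal : ℂ)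
    set a := (starRingEnd ℂ) ((ψ : ℝ → ℂ) x)
    set b := (ψ : ℝ → ℂ) x
    set e := Complex.exp (Complex.I * p * x)
    linear_combination (-(a * b * m)) * he
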